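/- arXiv:1805.08954 — 4 statements merged into one kernel-verified Lean document; each statement's English description precedes it below -/
import Mathlib

section
/- Contiguous relation for monic big q-Jacobi polynomials in the first parameter: for n ≥ 1, P̃_n(x; α/q, β, γ; q) = P̃_n(x; α, β, γ; q) + [α q (q^n − 1)(β q^n − 1)(γ q^n − 1) / ((αβ q^{2n} − 1)(αβ q^{2n} − q))] · P̃_{n−1}(x; α, β, γ; q), as an identity of polynomials in x (valid whenever the denominators are nonzero). -/
/-- The q-Pochhammer symbol `(a; q)_m`. -/
noncomputable def qPoch (q a : ℝ) (m : ℕ) : ℝ := ∏ j ∈ Finset.range m, (1 - a * q ^ j)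

/-- The monic big q-Jacobi polynomial
`P̃_n(x; α, β, γ; q) = ((αq;q)_n (γq;q)_n / (αβq^{n+1};q)_n) ₃φ₂(q^{-n}, αβq^{n+1}, x; αq, γq; q, q)`. -/
noncomputable def bigQJacobi (q α β γ : ℝ) (n : ℕ) (x : ℝ) : ℝ :=
  (qPoch q (α * q) n * qPoch q (γ * q) n / qPoch q (α * β * q ^ (n + 1)) n) *
    ∑ m ∈ Finset.range (n + 1),
      qPoch q (q ^ (-(n : ℤ))) m * qPoch q (α * β * q ^ (n + 1)) m * qPoch q x m * q ^ m /
        (qPoch q (α * q) m * qPoch q (γ * q) m * qPoch q q m)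

lemma qPoch_succ_right (q a : ℝ) (k : ℕ) :
    qPoch q a (k + 1) = qPoch q a k * (1 - a * q ^ k) := Finset.prod_range_succ _ _

lemma qPoch_succ_left (q a : ℝ) (k : ℕ) :
    qPoch q a (k + 1) = (1 - a) * qPoch q (a * q) k := by
  rw [qPoch, Finset.prod_range_succ']
  simp only [pow_zero, mul_one, qPoch]
  rw [mul_comm]
  congr 1
  exact Finset.prod_congr rfl fun j _ => by ring

lemma qPoch_shift (q a : ℝ) (m : ℕ) :
    qPoch q a m * (1 - a * q ^ m) = (1 - a) * qPoch q (a * q) m :=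
  (qPoch_succ_right q a m).symm.trans (qPoch_succ_left q a m)

lemma qPoch_ne_zero {q a : ℝ} (h : ∀ j : ℕ, a * q ^ j ≠ 1) (m : ℕ) : qPoch q a m ≠ 0 := by
  rw [qPoch, Finset.prod_ne_zero_iff]
  exact fun j _ => sub_ne_zero.mpr (Ne.symm (h j))

lemma qPoch_eq_zero {q a : ℝ} {m j : ℕ} (hj : j < m) (h : a * q ^ j = 1) :
    qPoch q a m = 0 :=
  Finset.prod_eq_zero (Finset.mem_range.mpr hj) (by rw [h]; ring)

set_option maxHeartbeats 2000000 in
/-- Contiguous relation for monic big q-Jacobi polynomials in the first parameter. -/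
theorem bigQJacobi_shift_alpha (q α β γ : ℝ) (n : ℕ)
    (hq : 0 < q) (hq1 : q < 1) (hn : 1 ≤ n)
    (hα : ∀ m : ℕ, α * q ^ m ≠ 1) (hγ : ∀ m : ℕ, γ * q ^ m ≠ 1)
    (hαβ : ∀ m : ℕ, α * β * q ^ m ≠ 1) :
    ∀ x : ℝ,
      bigQJacobi q (α / q) β γ n x
        = bigQJacobi q α β γ n x
          + (α * q * (q ^ n - 1) * (β * q ^ n - 1) * (γ * q ^ n - 1) /
              ((α * β * q ^ (2 * n) - 1) * (α * β * q ^ (2 * n) - q))) *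
            bigQJacobi q α β γ (n - 1) x := by
  intro x
  obtain ⟨k, rfl⟩ : ∃ k, n = k + 1 := ⟨n - 1, (Nat.succ_pred_eq_of_pos hn).symm⟩
  have hq0 : q ≠ 0 := ne_of_gt hq
  -- nonzero facts
  have hAq : ∀ m, qPoch q (α * q) m ≠ 0 :=
    qPoch_ne_zero fun j h => hα (j + 1) (by linear_combination h)
  have hGq : ∀ m, qPoch q (γ * q) m ≠ 0 :=
    qPoch_ne_zero fun j h => hγ (j + 1) (by linear_combination h)
  have hQq : ∀ m, qPoch q q m ≠ 0 := by
    refine qPoch_ne_zero fun j => ne_of_lt ?_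
    have : q ^ (j + 1) < 1 := pow_lt_one₀ hq.le hq1 (Nat.succ_ne_zero j)
    calc q * q ^ j = q ^ (j + 1) := by ring
      _ < 1 := this
  have hA0 : ∀ m, qPoch q α m ≠ 0 := qPoch_ne_zero hα
  have hAB : ∀ e m, qPoch q (α * β * q ^ e) m ≠ 0 := fun e =>
    qPoch_ne_zero fun j h => hαβ (e + j) (by rw [pow_add]; linear_combination h)
  have hd1 : α * β * q ^ (2 * (k + 1)) - 1 ≠ 0 := sub_ne_zero.mpr (hαβ _)
  have hd2 : α * β * q ^ (2 * (k + 1)) - q ≠ 0 := by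
    intro h
    exact hαβ (2 * k + 1) (mul_right_cancel₀ hq0 (by linear_combination h))
  simp only [bigQJacobi, Nat.add_sub_cancel, zpow_neg, zpow_natCast,
    div_mul_cancel₀ α hq0,
    show α / q * β * q ^ (k + 1 + 1) = α * β * q ^ (k + 1) by field_simp; ring]
  -- extend the (n-1)-sum to range (k+2)
  have hzero : qPoch q ((q ^ k)⁻¹) (k + 1) = 0 :=
    qPoch_eq_zero (Nat.lt_succ_self k) (by field_simp)
  have hext : ∑ m ∈ Finset.range (k + 1),
        qPoch q ((q ^ k)⁻¹) m * qPoch q (α * β * q ^ (k + 1)) m * qPoch q x m * q ^ m /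
          (qPoch q (α * q) m * qPoch q (γ * q) m * qPoch q q m)
      = ∑ m ∈ Finset.range (k + 1 + 1),
        qPoch q ((q ^ k)⁻¹) m * qPoch q (α * β * q ^ (k + 1)) m * qPoch q x m * q ^ m /
          (qPoch q (α * q) m * qPoch q (γ * q) m * qPoch q q m) := by
    rw [Finset.sum_range_succ (n := k + 1), hzero]
    simp
  rw [hext, Finset.mul_sum, Finset.mul_sum, Finset.mul_sum, Finset.mul_sum,
    ← Finset.sum_add_distrib]
  refine Finset.sum_congr rfl fun m hm => ?_
  rcases Nat.lt_succ_iff_lt_or_eq.mp (Finset.mem_range.mp hm) with hmk | rfl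
  · -- m ≤ k : main case
    have hmk' : m ≤ k := Nat.lt_succ_iff.mp hmk
    have hpow : (q : ℝ) ^ (k + 1) ≠ 0 := pow_ne_zero _ hq0
    have hα0 : (1 : ℝ) - α ≠ 0 := sub_ne_zero.mpr (Ne.symm (by simpa using hα 0))
    have h3 : (1 : ℝ) - α * β * q ^ (k + 1) ≠ 0 := sub_ne_zero.mpr (Ne.symm (hαβ (k + 1)))
    have hqk1 : (q : ℝ) ^ (k + 1) - 1 ≠ 0 :=
      ne_of_lt (sub_neg.mpr (pow_lt_one₀ hq.le hq1 (Nat.succ_ne_zero k)))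
    have hinv : (q : ℝ) ^ (k + 1) * (q ^ (k + 1))⁻¹ = 1 := mul_inv_cancel₀ hpow
    have h6 : 1 - α * β * q ^ (k + 1) * q ^ k ≠ 0 := by
      intro h
      exact hαβ (2 * k + 1) (by linear_combination -h)
    have h5 : 1 - α * β * q ^ (k + 1 + 1) * q ^ k ≠ 0 := by
      intro h
      exact hαβ (2 * k + 2) (by linear_combination -h)
    have h7 : 1 - α * q ^ m ≠ 0 := sub_ne_zero.mpr (Ne.symm (hα m))
    have e1 : qPoch q α (k + 1) = (1 - α) * qPoch q (α * q) k := qPoch_succ_left q α k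
    have e2 : qPoch q (γ * q) (k + 1) = qPoch q (γ * q) k * (1 - γ * q * q ^ k) :=
      qPoch_succ_right ..
    have e3 : qPoch q (α * β * q ^ (k + 1)) (k + 1)
        = (1 - α * β * q ^ (k + 1)) * qPoch q (α * β * q ^ (k + 1 + 1)) k := by
      rw [qPoch_succ_left, show α * β * q ^ (k + 1) * q = α * β * q ^ (k + 1 + 1) by ring]
    have e4 : qPoch q (α * q) (k + 1) = qPoch q (α * q) k * (1 - α * q * q ^ k) :=
      qPoch_succ_right ..
    have e5 : qPoch q (α * β * q ^ (k + 1 + 1)) (k + 1)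
        = qPoch q (α * β * q ^ (k + 1 + 1)) k * (1 - α * β * q ^ (k + 1 + 1) * q ^ k) :=
      qPoch_succ_right ..
    have f6 : qPoch q (α * β * q ^ (k + 1 + 1)) k
        = qPoch q (α * β * q ^ (k + 1)) k * (1 - α * β * q ^ (k + 1) * q ^ k) /
            (1 - α * β * q ^ (k + 1)) := by
      rw [eq_div_iff h3, qPoch_shift,
        show α * β * q ^ (k + 1) * q = α * β * q ^ (k + 1 + 1) by ring]
      ring
    have f7 : qPoch q (α * q) m = qPoch q α m * (1 - α * q ^ m) / (1 - α) := by
      rw [eq_div_iff hα0, qPoch_shift]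
      ring
    have f8 : qPoch q (α * β * q ^ (k + 1 + 1)) m
        = qPoch q (α * β * q ^ (k + 1)) m * (1 - α * β * q ^ (k + 1) * q ^ m) /
            (1 - α * β * q ^ (k + 1)) := by
      rw [eq_div_iff h3, qPoch_shift,
        show α * β * q ^ (k + 1) * q = α * β * q ^ (k + 1 + 1) by ring]
      ring
    have f9 : qPoch q ((q ^ k)⁻¹) m
        = qPoch q ((q ^ (k + 1))⁻¹) m * (q ^ (k + 1) - q ^ m) / (q ^ (k + 1) - 1) := by
      rw [eq_div_iff hqk1]
      have h := qPoch_shift q ((q ^ (k + 1))⁻¹) m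
      rw [show (q ^ (k + 1))⁻¹ * q = (q ^ k)⁻¹ by
        rw [pow_succ, mul_inv, mul_assoc, inv_mul_cancel₀ hq0, mul_one]] at h
      linear_combination (-(q ^ (k + 1))) * h +
        (qPoch q ((q ^ k)⁻¹) m - qPoch q ((q ^ (k + 1))⁻¹) m * q ^ m) * hinv
    rw [e1, e2, e3, e4, e5, f6, f7, f8, f9]
    have hAAm := hA0 m
    have hGm := hGq m
    have hQm := hQq m
    have hB1k := hAB (k + 1) k
    set Pk := qPoch q (α * q) k
    set Gk := qPoch q (γ * q) k
    set B1k := qPoch q (α * β * q ^ (k + 1)) k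
    set AAm := qPoch q α m
    set Gm := qPoch q (γ * q) m
    set Qm := qPoch q q m
    set B1m := qPoch q (α * β * q ^ (k + 1)) m
    set Tm := qPoch q ((q ^ (k + 1))⁻¹) m
    set Xm := qPoch q x m
    have h6' : 1 - α * q ^ k * β * q ^ (k + 1) ≠ 0 := by convert h6 using 1; ring
    have h5' : 1 - α * q ^ k * β * q ^ (k + 1 + 1) ≠ 0 := by convert h5 using 1; ring
    field_simp
    ring
  · -- m = k + 1
    rw [hzero]
    have hAA := hA0 (k + 1)
    have hGG := hGq (k + 1)
    have hB1 := hAB (k + 1) (k + 1)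
    have hB2 := hAB (k + 1 + 1) (k + 1)
    have hQQ := hQq (k + 1)
    have hAQ := hAq (k + 1)
    set AA := qPoch q α (k + 1)
    set GG := qPoch q (γ * q) (k + 1)
    set B1 := qPoch q (α * β * q ^ (k + 1)) (k + 1)
    set B2 := qPoch q (α * β * q ^ (k + 1 + 1)) (k + 1)
    set QQ := qPoch q q (k + 1)
    set AQ := qPoch q (α * q) (k + 1)
    set TT := qPoch q ((q ^ (k + 1))⁻¹) (k + 1)
    set XX := qPoch q x (k + 1)
    field_simp
    ring
end

section
/- Contiguous relation for monic little q-Jacobi polynomials in α: for n ≥ 1, p̃_n(x; α/q, β | q) = p̃_n(x; α, β | q) + [α q^n (q^n − 1)(β q^n − 1) / ((αβ q^{2n} − 1)(αβ q^{2n} − q))] · p̃_{n−1}(x; α, β | q), as an identity of polynomials in x (assuming the denominators are nonzero). -/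
/-- The monic little q-Jacobi polynomial
`p̃_n(x; α, β | q) = (−1)^n q^{n(n−1)/2} ((αq;q)_n / (αβq^{n+1};q)_n) ₂φ₁(q^{-n}, αβq^{n+1}; αq; q, qx)`. -/
noncomputable def littleQJacobi (q α β : ℝ) (n : ℕ) (x : ℝ) : ℝ :=
  (-1 : ℝ) ^ n * q ^ (n * (n - 1) / 2) *
    (qPoch q (α * q) n / qPoch q (α * β * q ^ (n + 1)) n) *
    ∑ m ∈ Finset.range (n + 1),
      qPoch q (q ^ (-(n : ℤ))) m * qPoch q (α * β * q ^ (n + 1)) m * (q * x) ^ m /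
        (qPoch q (α * q) m * qPoch q q m)

lemma qPoch_succ (q a : ℝ) (m : ℕ) : qPoch q a (m+1) = qPoch q a m * (1 - a * q ^ m) :=
  Finset.prod_range_succ _ _

lemma qPoch_succ' (q a : ℝ) (m : ℕ) : qPoch q a (m+1) = (1 - a) * qPoch q (a*q) m := by
  rw [qPoch, Finset.prod_range_succ']
  simp only [pow_zero, mul_one]
  rw [mul_comm, qPoch]
  congr 1
  exact Finset.prod_congr rfl fun j _ => by ring

lemma qPoch_rec (q a : ℝ) (m : ℕ) :
    (1 - a) * qPoch q (a*q) m = qPoch q a m * (1 - a * q ^ m) := by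
  rw [← qPoch_succ', qPoch_succ]

lemma qPoch_q_ne_zero {q : ℝ} (hq : 0 < q) (hq1 : q < 1) (m : ℕ) : qPoch q q m ≠ 0 := by
  apply qPoch_ne_zero
  intro j
  have : q * q ^ j < 1 := by
    calc q * q ^ j ≤ q * 1 := by nlinarith [pow_le_one₀ (le_of_lt hq) (le_of_lt hq1) (n := j)]
    _ < 1 := by linarith
  linarith

lemma qPoch_inv_ne_zero {q : ℝ} (hq : 0 < q) (hq1 : q < 1) {n m : ℕ} (hm : m ≤ n) :
    qPoch q ((q ^ n)⁻¹) m ≠ 0 := by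
  apply Finset.prod_ne_zero_iff.mpr
  intro j hj
  have hjn : j < n := lt_of_lt_of_le (Finset.mem_range.mp hj) hm
  have h1 : q ^ n < q ^ j := pow_lt_pow_right_of_lt_one₀ hq hq1 hjn
  have h2 : (0:ℝ) < q ^ n := pow_pos hq n
  have : (1:ℝ) < (q ^ n)⁻¹ * q ^ j := by
    rw [inv_mul_eq_div, lt_div_iff₀ h2]
    linarith
  intro hz; linarith

lemma qPoch_inv_zero {q : ℝ} (hq : q ≠ 0) (k : ℕ) : qPoch q ((q ^ k)⁻¹) (k+1) = 0 := by
  apply Finset.prod_eq_zero (Finset.self_mem_range_succ k)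
  rw [inv_mul_cancel₀ (pow_ne_zero k hq)]
  ring

lemma shift_ne {q α β : ℝ} (hαβ : ∀ j : ℕ, α * β * q ^ j ≠ 1) (s : ℕ) :
    ∀ j : ℕ, (α * β * q ^ s) * q ^ j ≠ 1 := fun j h =>
  hαβ (s + j) (by rw [pow_add]; linear_combination h)

lemma shiftα_ne {q α : ℝ} (hα : ∀ j : ℕ, α * q ^ j ≠ 1) :
    ∀ j : ℕ, (α * q) * q ^ j ≠ 1 := fun j h =>
  hα (1 + j) (by rw [pow_add, pow_one]; linear_combination h)

set_option maxHeartbeats 2000000 in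
lemma key (q α β : ℝ) (k m : ℕ) (hq : 0 < q) (hq1 : q < 1) (hm : m ≤ k + 1)
    (hα : ∀ j : ℕ, α * q ^ j ≠ 1) (hαβ : ∀ j : ℕ, α * β * q ^ j ≠ 1) :
    qPoch q α (k+1) / qPoch q (α*β*q^(k+1)) (k+1) *
      (qPoch q ((q^(k+1))⁻¹) m * qPoch q (α*β*q^(k+1)) m / (qPoch q α m * qPoch q q m))
    = qPoch q (α*q) (k+1) / qPoch q (α*β*q^(k+1+1)) (k+1) *
      (qPoch q ((q^(k+1))⁻¹) m * qPoch q (α*β*q^(k+1+1)) m / (qPoch q (α*q) m * qPoch q q m))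
    - (α * q * (q^(k+1) - 1) * (β*q^(k+1) - 1) /
        ((α*β*q^(2*(k+1)) - 1) * (α*β*q^(2*(k+1)) - q))) *
      (qPoch q (α*q) k / qPoch q (α*β*q^(k+1)) k *
        (qPoch q ((q^k)⁻¹) m * qPoch q (α*β*q^(k+1)) m / (qPoch q (α*q) m * qPoch q q m))) := by
  have hq0 : q ≠ 0 := hq.ne'
  have hd1 : (1:ℝ) - α * q ^ m ≠ 0 := fun h => hα m (by linarith)
  have hd1' : (1:ℝ) - α ≠ 0 := fun h => hα 0 (by rw [pow_zero]; linarith)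
  have hd2 : (1:ℝ) - α*β*q^(k+1)*q^m ≠ 0 := fun h => hαβ (k+1+m) (by rw [pow_add]; linarith [h])
  have hd3 : (1:ℝ) - α*β*q^(k+1)*q^k ≠ 0 := fun h => hαβ (k+1+k) (by rw [pow_add]; linarith [h])
  have hd4 : (1:ℝ) - α*β*q^(k+1) ≠ 0 := fun h => hαβ (k+1) (by linarith)
  have hinv1 : (1:ℝ) < (q^(k+1))⁻¹ := by
    rw [lt_inv_comm₀ (by norm_num) (pow_pos hq _)]
    simpa using pow_lt_one₀ hq.le hq1 (Nat.succ_ne_zero k)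
  have hd5 : (1:ℝ) - (q^(k+1))⁻¹ ≠ 0 := by linarith
  have hD1 : α*β*q^(2*(k+1)) - 1 ≠ 0 := fun h => hαβ (2*(k+1)) (by linarith)
  have hD2 : α*β*q^(2*(k+1)) - q ≠ 0 := by
    intro h0
    apply hαβ (2*k+1)
    have h1 : α*β*q^(2*k+1) * q = 1 * q := by
      rw [one_mul]
      calc α*β*q^(2*k+1)*q = α*β*q^(2*(k+1)) := by ring
      _ = q := by linarith
    exact mul_right_cancel₀ hq0 h1
  have hP1 : qPoch q (α*q) k ≠ 0 := qPoch_ne_zero (shiftα_ne hα) k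
  have hP2 : qPoch q (α*β*q^(k+1+1)) k ≠ 0 := qPoch_ne_zero (shift_ne hαβ (k+1+1)) k
  have hP3 : qPoch q (α*q) m ≠ 0 := qPoch_ne_zero (shiftα_ne hα) m
  have hP4 : qPoch q (α*β*q^(k+1+1)) m ≠ 0 := qPoch_ne_zero (shift_ne hαβ (k+1+1)) m
  have hP5 : qPoch q ((q^(k+1))⁻¹) m ≠ 0 := qPoch_inv_ne_zero hq hq1 hm
  have hP6 : qPoch q q m ≠ 0 := qPoch_q_ne_zero hq hq1 m
  -- rewrite shifted Pochhammers
  have h1 : qPoch q α (k+1) = (1-α) * qPoch q (α*q) k := qPoch_succ' q α k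
  have h2 : qPoch q (α*β*q^(k+1)) (k+1)
      = (1 - α*β*q^(k+1)) * qPoch q (α*β*q^(k+1+1)) k := by
    rw [qPoch_succ', show α*β*q^(k+1)*q = α*β*q^(k+1+1) from by ring]
  have h3 : qPoch q (α*q) (k+1) = qPoch q (α*q) k * (1 - α*q*q^k) := qPoch_succ q (α*q) k
  have h4 : qPoch q (α*β*q^(k+1+1)) (k+1)
      = qPoch q (α*β*q^(k+1+1)) k * (1 - α*β*q^(k+1+1)*q^k) := qPoch_succ _ _ _
  have h5 : qPoch q α m = (1-α) * qPoch q (α*q) m / (1 - α*q^m) := by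
    rw [eq_div_iff hd1]; linear_combination (qPoch_rec q α m).symm
  have h6 : qPoch q (α*β*q^(k+1)) m
      = (1 - α*β*q^(k+1)) * qPoch q (α*β*q^(k+1+1)) m / (1 - α*β*q^(k+1)*q^m) := by
    rw [eq_div_iff hd2]
    have := qPoch_rec q (α*β*q^(k+1)) m
    rw [show α*β*q^(k+1)*q = α*β*q^(k+1+1) from by ring] at this
    linear_combination this.symm
  have h7 : qPoch q (α*β*q^(k+1)) k
      = (1 - α*β*q^(k+1)) * qPoch q (α*β*q^(k+1+1)) k / (1 - α*β*q^(k+1)*q^k) := by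
    rw [eq_div_iff hd3]
    have := qPoch_rec q (α*β*q^(k+1)) k
    rw [show α*β*q^(k+1)*q = α*β*q^(k+1+1) from by ring] at this
    linear_combination this.symm
  have h8 : qPoch q ((q^k)⁻¹) m
      = qPoch q ((q^(k+1))⁻¹) m * (1 - (q^(k+1))⁻¹*q^m) / (1 - (q^(k+1))⁻¹) := by
    rw [eq_div_iff hd5]
    have := qPoch_rec q ((q^(k+1))⁻¹) m
    rw [show ((q:ℝ)^(k+1))⁻¹*q = (q^k)⁻¹ from by
      rw [pow_succ, mul_inv, mul_assoc, inv_mul_cancel₀ hq0, mul_one]] at this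
    linear_combination this
  rw [h1, h2, h3, h4, h5, h6, h7, h8]
  have hqk : (q:ℝ)^k ≠ 0 := pow_ne_zero _ hq0
  have hqm : (q:ℝ)^m ≠ 0 := pow_ne_zero _ hq0
  have e1 : (q:ℝ)^(k+1) = q^k * q := pow_succ q k
  have e2 : (q:ℝ)^(2*(k+1)) = (q^k*q)*(q^k*q) := by rw [two_mul, pow_add, e1]
  have e3 : (q:ℝ)^(k+1+1) = q^k * q * q := by rw [pow_succ, e1]
  rw [e3, e2, e1]
  have hd2' : (1:ℝ) - α*β*(q^k*q)*q^m ≠ 0 := fun h =>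
    hαβ (k+1+m) (by rw [pow_add, pow_succ]; linear_combination -h)
  have hd3' : (1:ℝ) - α*β*(q^k*q)*q^k ≠ 0 := fun h =>
    hαβ (k+1+k) (by rw [pow_add, pow_succ]; linear_combination -h)
  have hd4' : (1:ℝ) - α*β*(q^k*q) ≠ 0 := fun h =>
    hαβ (k+1) (by rw [pow_succ]; linear_combination -h)
  have hd6' : (1:ℝ) - α*β*(q^k*q*q)*q^k ≠ 0 := fun h =>
    hαβ (k+1+1+k) (by rw [pow_add, pow_succ, pow_succ]; linear_combination -h)
  have hd5' : (1:ℝ) - ((q:ℝ)^k*q)⁻¹ ≠ 0 := by rw [← pow_succ]; exact hd5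
  have hD1' : α*β*((q:ℝ)^k*q*(q^k*q)) - 1 ≠ 0 := fun h =>
    hD1 (by rw [two_mul, pow_add, pow_succ]; linear_combination h)
  have hD2' : α*β*((q:ℝ)^k*q*(q^k*q)) - q ≠ 0 := fun h =>
    hD2 (by rw [two_mul, pow_add, pow_succ]; linear_combination h)
  have hKq : ((q:ℝ)^k*q) ≠ 0 := mul_ne_zero hqk hq0
  have hP2' : qPoch q (α*β*((q:ℝ)^k*q*q)) k ≠ 0 := by rw [← e3]; exact hP2
  have hP4' : qPoch q (α*β*((q:ℝ)^k*q*q)) m ≠ 0 := by rw [← e3]; exact hP4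
  have hP5' : qPoch q (((q:ℝ)^k*q))⁻¹ m ≠ 0 := by rw [← e1]; exact hP5
  clear hP2 hP4 hP5 hd2 hd3 hd4 hd5 hD1 hD2 hinv1 h1 h2 h3 h4 h5 h6 h7 h8
  set K := (q:ℝ)^k with hKdef
  set M := (q:ℝ)^m with hMdef
  set P1 := qPoch q (α*q) k with hP1def
  set P2 := qPoch q (α*β*(K*q*q)) k with hP2def
  set P3 := qPoch q (α*q) m with hP3def
  set P4 := qPoch q (α*β*(K*q*q)) m with hP4def
  set P5 := qPoch q ((K*q)⁻¹) m with hP5def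
  set P6 := qPoch q q m with hP6def
  clear_value K M P1 P2 P3 P4 P5 P6
  have E1 : (1 - α) * P1 / ((1 - α * β * (K * q)) * P2) *
      (P5 * ((1 - α * β * (K * q)) * P4 / (1 - α * β * (K * q) * M)) / ((1 - α) * P3 / (1 - α * M) * P6))
      = P1 * P5 * P4 * (1 - α * M) / (P2 * P3 * P6 * (1 - α * β * (K * q) * M)) := by
    simp only [← mul_assoc] at *
    field_simp
  have E2 : P1 * (1 - α * q * K) / (P2 * (1 - α * β * (K * q * q) * K)) * (P5 * P4 / (P3 * P6))
      = P1 * P5 * P4 * (1 - α * q * K) / (P2 * P3 * P6 * (1 - α * β * (K * q * q) * K)) := by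
    field_simp
  have E3 : α * q * (K * q - 1) * (β * (K * q) - 1) /
        ((α * β * (K * q * (K * q)) - 1) * (α * β * (K * q * (K * q)) - q)) *
        (P1 / ((1 - α * β * (K * q)) * P2 / (1 - α * β * (K * q) * K)) *
          (P5 * (1 - (K * q)⁻¹ * M) / (1 - (K * q)⁻¹) * ((1 - α * β * (K * q)) * P4 / (1 - α * β * (K * q) * M)) /
            (P3 * P6)))
      = -(P1 * P5 * P4 * (α * (β * (K * q) - 1) * (K * q - M))) /
          (P2 * P3 * P6 * ((α * β * (K * q * (K * q)) - 1) * (1 - α * β * (K * q) * M))) := by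
    have hKq1 : K * q - 1 ≠ 0 := by
      intro h
      apply hd5'
      rw [show (K*q:ℝ) = 1 by linarith]
      norm_num
    rw [div_div_eq_mul_div]
    have r1 : P5 * (1 - (K * q)⁻¹ * M) / (1 - (K * q)⁻¹) = P5 * (K*q - M) / (K*q - 1) := by
      rw [div_eq_div_iff hd5' hKq1]
      field_simp
    rw [r1]
    simp only [div_mul_div_comm, div_div, mul_div_assoc', div_mul_eq_mul_div]
    rw [div_eq_div_iff (by simp only [ne_eq, mul_eq_zero, not_or]; tauto) (by simp only [ne_eq, mul_eq_zero, not_or]; tauto)]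
    ring
  rw [E1, E2, E3]
  rw [div_sub_div _ _ (by exact mul_ne_zero (mul_ne_zero (mul_ne_zero hP2' hP3) hP6) hd6')
    (by exact mul_ne_zero (mul_ne_zero (mul_ne_zero hP2' hP3) hP6) (mul_ne_zero hD1' hd2')),
    div_eq_div_iff (by exact mul_ne_zero (mul_ne_zero (mul_ne_zero hP2' hP3) hP6) hd2')
    (by positivity)]
  ring

set_option maxHeartbeats 2000000 in
/-- Contiguous relation for monic little q-Jacobi polynomials in α. -/
theorem littleQJacobi_shift_alpha (q α β : ℝ) (n : ℕ)
    (hq : 0 < q) (hq1 : q < 1) (hn : 1 ≤ n)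
    (hα : ∀ m : ℕ, α * q ^ m ≠ 1) (hαβ : ∀ m : ℕ, α * β * q ^ m ≠ 1) :
    ∀ x : ℝ,
      littleQJacobi q (α / q) β n x
        = littleQJacobi q α β n x
          + (α * q ^ n * (q ^ n - 1) * (β * q ^ n - 1) /
              ((α * β * q ^ (2 * n) - 1) * (α * β * q ^ (2 * n) - q))) *
            littleQJacobi q α β (n - 1) x := by
  intro x
  obtain ⟨k, rfl⟩ : ∃ k, n = k + 1 := ⟨n - 1, (Nat.succ_pred_eq_of_pos hn).symm⟩
  have hq0 : q ≠ 0 := hq.ne'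
  have hz1 : (q:ℝ) ^ (-((k+1 : ℕ) : ℤ)) = (q^(k+1))⁻¹ := by
    rw [zpow_neg, zpow_natCast]
  have hz2 : (q:ℝ) ^ (-((k : ℕ) : ℤ)) = (q^k)⁻¹ := by
    rw [zpow_neg, zpow_natCast]
  have hdiv1 : α / q * q = α := div_mul_cancel₀ α hq0
  have hdiv2 : α / q * β * q^(k+1+1) = α * β * q^(k+1) := by
    field_simp
    ring
  have hE : (k+1) * k / 2 = k * (k-1) / 2 + k := by
    rcases k with _ | j
    · rfl
    · rw [Nat.succ_sub_one]
      have h2 : (j+1+1) * (j+1) = (j+1) * j + 2 * (j+1) := by ring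
      rw [h2, Nat.add_mul_div_left _ _ (by norm_num : 0 < 2)]
  have hEpow : (q:ℝ) ^ (k * (k-1) / 2 + k) = q ^ (k * (k-1) / 2) * q ^ k := pow_add q _ _
  simp only [littleQJacobi, Nat.add_sub_cancel]
  simp only [hz1, hz2, hdiv1, hdiv2, hE, hEpow]
  have hext : (∑ m ∈ Finset.range (k+1+1),
        qPoch q ((q^k)⁻¹) m * qPoch q (α * β * q ^ (k + 1)) m * (q * x) ^ m /
          (qPoch q (α * q) m * qPoch q q m))
      = ∑ m ∈ Finset.range (k+1),
        qPoch q ((q^k)⁻¹) m * qPoch q (α * β * q ^ (k + 1)) m * (q * x) ^ m /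
          (qPoch q (α * q) m * qPoch q q m) := by
    rw [Finset.sum_range_succ, qPoch_inv_zero hq0, zero_mul, zero_mul, zero_div, add_zero]
  rw [← hext]
  simp only [Finset.mul_sum]
  rw [← Finset.sum_add_distrib]
  refine Finset.sum_congr rfl fun m hm => ?_
  have hmle : m ≤ k + 1 := Nat.lt_succ_iff.mp (Finset.mem_range.mp hm)
  linear_combination ((-1:ℝ)^(k+1) * (q ^ (k * (k-1) / 2) * q ^ k) * (q*x)^m) *
    key q α β k m hq hq1 hmle hα hαβ
end

section
/- Contiguous relation for monic Racah polynomials in α: for n ≥ 1, R̃_n(λ(x); α−1, β, γ, δ) = R̃_n(λ(x); α, β, γ, δ) − [n(β+n)(β+δ+n)(γ+n) / ((2n+α+β)(2n+α+β−1))] · R̃_{n−1}(λ(x); α, β, γ, δ), as an identity of polynomials in the variable λ(x) = x(x+γ+δ+1) (assuming the denominators are nonzero). -/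
/-- The (rising) Pochhammer symbol `(a)_m = ∏_{j=0}^{m-1} (a + j)` over ℝ. -/
noncomputable def rPoch (a : ℝ) (m : ℕ) : ℝ := ∏ j ∈ Finset.range m, (a + j)

/-- The monic Racah polynomial, as a function of the real variable `x`
(the natural variable being `λ(x) = x(x+γ+δ+1)`):
`R̃_n(λ(x); α,β,γ,δ) = ((α+1)_n (β+δ+1)_n (γ+1)_n / (n+α+β+1)_n)
  ₄F₃(−n, n+α+β+1, −x, x+γ+δ+1; α+1, β+δ+1, γ+1; 1)`. -/
noncomputable def racah (α β γ δ : ℝ) (n : ℕ) (x : ℝ) : ℝ :=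
  (rPoch (α + 1) n * rPoch (β + δ + 1) n * rPoch (γ + 1) n /
      rPoch ((n : ℝ) + α + β + 1) n) *
    ∑ m ∈ Finset.range (n + 1),
      rPoch (-(n : ℝ)) m * rPoch ((n : ℝ) + α + β + 1) m *
          rPoch (-x) m * rPoch (x + γ + δ + 1) m /
        (rPoch (α + 1) m * rPoch (β + δ + 1) m * rPoch (γ + 1) m * (Nat.factorial m : ℝ))

lemma rPoch_split (a : ℝ) (m d : ℕ) : rPoch a (m + d) = rPoch a m * rPoch (a + m) d := by
  unfold rPoch
  rw [Finset.prod_range_add]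
  congr 1
  refine Finset.prod_congr rfl fun j _ => ?_
  push_cast; ring

lemma rPoch_succ (a : ℝ) (k : ℕ) : rPoch a (k + 1) = rPoch a k * (a + k) := by
  unfold rPoch; rw [Finset.prod_range_succ]

lemma rPoch_one (a : ℝ) : rPoch a 1 = a := by
  unfold rPoch; simp

lemma rPoch_succ' (a : ℝ) (k : ℕ) : rPoch a (k + 1) = a * rPoch (a + 1) k := by
  have h := rPoch_split a 1 k
  rw [Nat.add_comm 1 k] at h
  rw [h, rPoch_one]
  norm_num

lemma rPoch_shift (a : ℝ) (k : ℕ) (ha : a ≠ 0) :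
    rPoch (a + 1) k = rPoch a k * (a + k) / a := by
  have h := (rPoch_succ a k).symm.trans (rPoch_succ' a k)
  field_simp
  linarith [h]

lemma rPoch_ne_zero (a : ℝ) (k : ℕ) (h : ∀ j : ℕ, j < k → a + (j : ℝ) ≠ 0) :
    rPoch a k ≠ 0 := by
  unfold rPoch
  exact Finset.prod_ne_zero_iff.mpr fun j hj => h j (Finset.mem_range.mp hj)

lemma rPoch_ne_zero' (a c : ℝ) (t : ℤ) (k : ℕ) (h : ∀ j : ℤ, c + j ≠ 0)
    (ha : a = c + t) : rPoch a k ≠ 0 := by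
  refine rPoch_ne_zero a k fun j _ => ?_
  have h2 := h (t + j)
  intro e
  apply h2
  push_cast
  rw [ha] at e
  linarith

lemma rPoch_neg_ne_zero (N k : ℕ) (hk : k ≤ N) : rPoch (-(N : ℝ)) k ≠ 0 := by
  refine rPoch_ne_zero _ _ fun j hj => ?_
  have hjN : j < N := lt_of_lt_of_le hj hk
  have : (j : ℝ) < (N : ℝ) := by exact_mod_cast hjN
  intro e; linarith

lemma cancel_aux (A Q G Cn W X Y f : ℝ) (hA : A ≠ 0) (hQ : Q ≠ 0) (hG : G ≠ 0)
    (hC : Cn ≠ 0) (hf : f ≠ 0) :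
    A * Q * G / Cn * (W * Cn * X * Y / (A * Q * G * f)) = W * X * Y / f := by
  field_simp

set_option maxHeartbeats 2000000 in
lemma aux (P1 P2 U QQ GG C V W Qm Gm X Y f A1 A2 q g c0 cc S1 S2 E N bN q2 g2 Z1 Z2 nN : ℝ)
    (hP1 : P1 ≠ 0) (hP2 : P2 ≠ 0) (hC : C ≠ 0) (hV : V ≠ 0) (hQm : Qm ≠ 0)
    (hGm : Gm ≠ 0) (hf : f ≠ 0) (hc0 : c0 ≠ 0) (hN : N ≠ 0)
    (hS1 : S1 ≠ 0) (hS2 : S2 ≠ 0)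
    (hq2 : q2 = q) (hg2 : g2 = g) (hZ1 : Z1 = S2) (hZ2 : Z2 = S1) (hnN : nN = -N)
    (rkey : A1 * S2 = A2 * cc + bN * E) :
    P1 * (A1 * U) * (QQ * q) * (GG * g) / (C * (V * S1)) *
      (W * C * X * Y / (P1 * Qm * Gm * f))
    = P2 * (U * A2) * (QQ * q) * (GG * g) / (C * (V * S1) * S2 / c0) *
        (W * (C * cc / c0) * X * Y / (P2 * Qm * Gm * f))
      - N * bN * q2 * g2 / (Z1 * Z2) *
        (P2 * U * QQ * GG / (C * V) * (W * E / nN * C * X * Y / (P2 * Qm * Gm * f))) := by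
  rw [hq2, hg2, hZ1, hZ2, hnN]
  set T : ℝ := U * QQ * q * GG * g * W * X * Y / (V * S1 * S2 * Qm * Gm * f) with hT
  have hL : P1 * (A1 * U) * (QQ * q) * (GG * g) / (C * (V * S1)) *
      (W * C * X * Y / (P1 * Qm * Gm * f)) = (A1 * S2) * T := by
    rw [hT]; field_simp
  have hA : P2 * (U * A2) * (QQ * q) * (GG * g) / (C * (V * S1) * S2 / c0) *
      (W * (C * cc / c0) * X * Y / (P2 * Qm * Gm * f)) = (A2 * cc) * T := by
    rw [hT]; field_simp
  have hB : N * bN * q * g / (S2 * S1) *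
      (P2 * U * QQ * GG / (C * V) * (W * E / -N * C * X * Y / (P2 * Qm * Gm * f)))
      = (-(bN * E)) * T := by
    rw [hT]; field_simp
  rw [hL, hA, hB]
  linear_combination T * rkey

set_option maxHeartbeats 1000000 in
/-- Contiguous relation for monic Racah polynomials in α. -/
theorem racah_shift_alpha (α β γ δ : ℝ) (n : ℕ) (hn : 1 ≤ n)
    (hα : ∀ k : ℤ, α + (k : ℝ) ≠ 0) (hβδ : ∀ k : ℤ, β + δ + (k : ℝ) ≠ 0)
    (hγ : ∀ k : ℤ, γ + (k : ℝ) ≠ 0) (hαβ : ∀ k : ℤ, α + β + (k : ℝ) ≠ 0) :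
    ∀ x : ℝ,
      racah (α - 1) β γ δ n x
        = racah α β γ δ n x
          - ((n : ℝ) * (β + n) * (β + δ + n) * (γ + n) /
              ((2 * n + α + β) * (2 * n + α + β - 1))) *
            racah α β γ δ (n - 1) x := by
  intro x
  obtain ⟨p, rfl⟩ : ∃ p, n = p + 1 := ⟨n - 1, (Nat.succ_pred_eq_of_pos hn).symm⟩
  simp only [racah, Nat.add_sub_cancel]
  set K : ℝ := (↑(p+1) : ℝ) * (β + ↑(p+1)) * (β + δ + ↑(p+1)) * (γ + ↑(p+1)) /
      ((2 * ↑(p+1) + α + β) * (2 * ↑(p+1) + α + β - 1)) with hK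
  rw [sub_add_cancel]
  rw [show ((p + 1 : ℕ) : ℝ) + (α - 1) + β + 1 = ((p : ℕ) : ℝ) + α + β + 1 from by push_cast; ring]
  have hstep : rPoch (-(p : ℝ)) (p + 1) = 0 := by
    unfold rPoch
    apply Finset.prod_eq_zero (Finset.mem_range.mpr (Nat.lt_succ_self p))
    ring
  have hext :
      (∑ m ∈ Finset.range (p + 1),
          rPoch (-(p : ℝ)) m * rPoch ((p : ℝ) + α + β + 1) m * rPoch (-x) m *
              rPoch (x + γ + δ + 1) m /
            (rPoch (α + 1) m * rPoch (β + δ + 1) m * rPoch (γ + 1) m * (m.factorial : ℝ)))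
        = ∑ m ∈ Finset.range (p + 1 + 1),
          rPoch (-(p : ℝ)) m * rPoch ((p : ℝ) + α + β + 1) m * rPoch (-x) m *
              rPoch (x + γ + δ + 1) m /
            (rPoch (α + 1) m * rPoch (β + δ + 1) m * rPoch (γ + 1) m * (m.factorial : ℝ)) := by
    conv_rhs => rw [Finset.sum_range_succ]
    rw [hstep]
    simp
  rw [hext, Finset.mul_sum, Finset.mul_sum, Finset.mul_sum, Finset.mul_sum,
    ← Finset.sum_sub_distrib]
  refine Finset.sum_congr rfl fun m hm => ?_
  have hm' : m ≤ p + 1 := Nat.lt_succ_iff.mp (Finset.mem_range.mp hm)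
  have nfm : (m.factorial : ℝ) ≠ 0 := Nat.cast_ne_zero.mpr (Nat.factorial_ne_zero m)
  rcases eq_or_lt_of_le hm' with rfl | hlt
  · -- m = p + 1
    rw [hstep]
    have n1 : rPoch α (p + 1) ≠ 0 := rPoch_ne_zero' _ α 0 _ hα (by norm_num)
    have n2 : rPoch (α + 1) (p + 1) ≠ 0 := rPoch_ne_zero' _ α 1 _ hα (by norm_num)
    have nq : rPoch (β + δ + 1) (p + 1) ≠ 0 := rPoch_ne_zero' _ (β + δ) 1 _ hβδ (by norm_num)
    have ng : rPoch (γ + 1) (p + 1) ≠ 0 := rPoch_ne_zero' _ γ 1 _ hγ (by norm_num)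
    have ncL : rPoch ((p : ℝ) + α + β + 1) (p + 1) ≠ 0 :=
      rPoch_ne_zero' _ (α + β) (p + 1) _ hαβ (by push_cast; ring)
    have ncA : rPoch (((p + 1 : ℕ) : ℝ) + α + β + 1) (p + 1) ≠ 0 :=
      rPoch_ne_zero' _ (α + β) (p + 2) _ hαβ (by push_cast; ring)
    rw [cancel_aux _ _ _ _ _ _ _ _ n1 nq ng ncL nfm,
      cancel_aux _ _ _ _ _ _ _ _ n2 nq ng ncA nfm]
    simp
  · -- m ≤ p
    obtain ⟨d, rfl⟩ : ∃ d, p = m + d := ⟨p - m, (Nat.add_sub_cancel' (Nat.lt_succ_iff.mp hlt)).symm⟩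
    have hc0 : ((m + d : ℕ) : ℝ) + α + β + 1 ≠ 0 := by
      have h2 := hαβ (m + d + 1)
      intro e; apply h2; push_cast at e ⊢; linarith
    have hN : -((m + d + 1 : ℕ) : ℝ) ≠ 0 := by
      simp only [ne_eq, neg_eq_zero, Nat.cast_eq_zero]
      omega
    have E8 : rPoch (((m + d + 1 : ℕ) : ℝ) + α + β + 1) (m + d + 1)
        = rPoch (((m + d : ℕ) : ℝ) + α + β + 1) (m + d + 1) *
            ((((m + d : ℕ) : ℝ) + α + β + 1) + ((m + d + 1 : ℕ) : ℝ)) /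
            (((m + d : ℕ) : ℝ) + α + β + 1) := by
      rw [show ((m + d + 1 : ℕ) : ℝ) + α + β + 1 = (((m + d : ℕ) : ℝ) + α + β + 1) + 1 from by
        push_cast; ring]
      exact rPoch_shift _ _ hc0
    have E9 : rPoch (((m + d + 1 : ℕ) : ℝ) + α + β + 1) m
        = rPoch (((m + d : ℕ) : ℝ) + α + β + 1) m *
            ((((m + d : ℕ) : ℝ) + α + β + 1) + (m : ℝ)) /
            (((m + d : ℕ) : ℝ) + α + β + 1) := by
      rw [show ((m + d + 1 : ℕ) : ℝ) + α + β + 1 = (((m + d : ℕ) : ℝ) + α + β + 1) + 1 from by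
        push_cast; ring]
      exact rPoch_shift _ _ hc0
    have E10 : rPoch (-((m + d : ℕ) : ℝ)) m
        = rPoch (-((m + d + 1 : ℕ) : ℝ)) m *
            ((-((m + d + 1 : ℕ) : ℝ)) + (m : ℝ)) / (-((m + d + 1 : ℕ) : ℝ)) := by
      rw [show -((m + d : ℕ) : ℝ) = -((m + d + 1 : ℕ) : ℝ) + 1 from by push_cast; ring]
      exact rPoch_shift _ _ hN
    have E6 : rPoch (((m + d : ℕ) : ℝ) + α + β + 1) (m + d + 1)
        = rPoch (((m + d : ℕ) : ℝ) + α + β + 1) m *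
            (rPoch (((m + d : ℕ) : ℝ) + α + β + 1 + (m : ℝ)) d *
              ((((m + d : ℕ) : ℝ) + α + β + 1 + (m : ℝ)) + (d : ℝ))) := by
      have h := rPoch_split (((m + d : ℕ) : ℝ) + α + β + 1) m (d + 1)
      rw [rPoch_succ] at h
      exact h
    have E7 : rPoch (((m + d : ℕ) : ℝ) + α + β + 1) (m + d)
        = rPoch (((m + d : ℕ) : ℝ) + α + β + 1) m *
            rPoch (((m + d : ℕ) : ℝ) + α + β + 1 + (m : ℝ)) d :=
      rPoch_split _ m d
    have E1 : rPoch α (m + d + 1)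
        = rPoch α m * ((α + (m : ℝ)) * rPoch (α + (m : ℝ) + 1) d) := by
      have h := rPoch_split α m (d + 1)
      rw [rPoch_succ'] at h
      exact h
    have E2 : rPoch (α + 1) (m + d + 1)
        = rPoch (α + 1) m * (rPoch (α + (m : ℝ) + 1) d * (α + (m : ℝ) + 1 + (d : ℝ))) := by
      have h := rPoch_split (α + 1) m (d + 1)
      rw [rPoch_succ, show α + 1 + (m : ℝ) = α + (m : ℝ) + 1 from by ring] at h
      exact h
    have E3 : rPoch (α + 1) (m + d)
        = rPoch (α + 1) m * rPoch (α + (m : ℝ) + 1) d := by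
      have h := rPoch_split (α + 1) m d
      rw [show α + 1 + (m : ℝ) = α + (m : ℝ) + 1 from by ring] at h
      exact h
    have E4 : rPoch (β + δ + 1) (m + d + 1)
        = rPoch (β + δ + 1) (m + d) * (β + δ + 1 + ((m + d : ℕ) : ℝ)) :=
      rPoch_succ _ _
    have E5 : rPoch (γ + 1) (m + d + 1)
        = rPoch (γ + 1) (m + d) * (γ + 1 + ((m + d : ℕ) : ℝ)) :=
      rPoch_succ _ _
    have nA : rPoch α m ≠ 0 := rPoch_ne_zero' _ α 0 _ hα (by norm_num)
    have nA1 : rPoch (α + 1) m ≠ 0 := rPoch_ne_zero' _ α 1 _ hα (by norm_num)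
    have nQ : rPoch (β + δ + 1) m ≠ 0 := rPoch_ne_zero' _ (β + δ) 1 _ hβδ (by norm_num)
    have nG : rPoch (γ + 1) m ≠ 0 := rPoch_ne_zero' _ γ 1 _ hγ (by norm_num)
    have nC : rPoch (((m + d : ℕ) : ℝ) + α + β + 1) m ≠ 0 :=
      rPoch_ne_zero' _ (α + β) (m + d + 1) _ hαβ (by push_cast; ring)
    have nV : rPoch (((m + d : ℕ) : ℝ) + α + β + 1 + (m : ℝ)) d ≠ 0 :=
      rPoch_ne_zero' _ (α + β) (m + d + 1 + m) _ hαβ (by push_cast; ring)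
    have hD1 : 2 * ((m + d + 1 : ℕ) : ℝ) + α + β ≠ 0 := by
      have h2 := hαβ (2 * (m + d) + 2)
      intro e; apply h2; push_cast at e ⊢; linarith
    have hD2 : 2 * ((m + d + 1 : ℕ) : ℝ) + α + β - 1 ≠ 0 := by
      have h2 := hαβ (2 * (m + d) + 1)
      intro e; apply h2; push_cast at e ⊢; linarith
    have hN' : ((m : ℝ)) + (d : ℝ) + 1 ≠ 0 := by positivity
    have hS1 : (m : ℝ) + (d : ℝ) + α + β + 1 + (m : ℝ) + (d : ℝ) ≠ 0 := by
      have h2 := hαβ (2 * (m + d) + 1)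
      intro e; apply h2; push_cast; linarith
    have hS2 : (m : ℝ) + (d : ℝ) + α + β + 1 + ((m : ℝ) + (d : ℝ) + 1) ≠ 0 := by
      have h2 := hαβ (2 * (m + d) + 2)
      intro e; apply h2; push_cast; linarith
    rw [hK, E8, E9, E6, E7, E10, E1, E2, E3, E4, E5]
    push_cast at hc0 nC nV ⊢
    exact aux (rPoch α m) (rPoch (α + 1) m) (rPoch (α + (m : ℝ) + 1) d)
      (rPoch (β + δ + 1) (m + d)) (rPoch (γ + 1) (m + d))
      (rPoch ((m : ℝ) + (d : ℝ) + α + β + 1) m)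
      (rPoch ((m : ℝ) + (d : ℝ) + α + β + 1 + (m : ℝ)) d)
      (rPoch (-((m : ℝ) + (d : ℝ) + 1)) m) (rPoch (β + δ + 1) m) (rPoch (γ + 1) m)
      (rPoch (-x) m) (rPoch (x + γ + δ + 1) m) (m.factorial : ℝ)
      (α + (m : ℝ)) (α + (m : ℝ) + 1 + (d : ℝ)) (β + δ + 1 + ((m : ℝ) + (d : ℝ)))
      (γ + 1 + ((m : ℝ) + (d : ℝ))) ((m : ℝ) + (d : ℝ) + α + β + 1)
      ((m : ℝ) + (d : ℝ) + α + β + 1 + (m : ℝ))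
      ((m : ℝ) + (d : ℝ) + α + β + 1 + (m : ℝ) + (d : ℝ))
      ((m : ℝ) + (d : ℝ) + α + β + 1 + ((m : ℝ) + (d : ℝ) + 1))
      (-((m : ℝ) + (d : ℝ) + 1) + (m : ℝ)) ((m : ℝ) + (d : ℝ) + 1)
      (β + ((m : ℝ) + (d : ℝ) + 1)) (β + δ + ((m : ℝ) + (d : ℝ) + 1))
      (γ + ((m : ℝ) + (d : ℝ) + 1)) (2 * ((m : ℝ) + (d : ℝ) + 1) + α + β)
      (2 * ((m : ℝ) + (d : ℝ) + 1) + α + β - 1) (-((m : ℝ) + (d : ℝ) + 1))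
      nA nA1 nC nV nQ nG nfm hc0 hN' hS1 hS2
      (by ring) (by ring) (by ring) (by ring) (by ring) (by ring)
end

section
/- Contiguous relation for monic continuous Hahn polynomials in a: for n ≥ 1, P̃_n(x; a−1, b, c, d) = P̃_n(x; a, b, c, d) + [i n (b+c+n−1)(b+d+n−1) / ((2n+a+b+c+d−3)(2n+a+b+c+d−2))] · P̃_{n−1}(x; a, b, c, d), as an identity of polynomials in x (assuming the denominators are nonzero). -/
/-- The (rising) Pochhammer symbol `(a)_m = ∏_{j=0}^{m-1} (a + j)` over ℂ. -/
noncomputable def cPoch (a : ℂ) (m : ℕ) : ℂ := ∏ j ∈ Finset.range m, (a + j)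

/-- The monic continuous Hahn polynomial, as a function of the real variable `x`:
`P̃_n(x; a,b,c,d) = (i^n (a+c)_n (a+d)_n / (n+a+b+c+d−1)_n)
  ₃F₂(−n, n+a+b+c+d−1, a+ix; a+c, a+d; 1)`. -/
noncomputable def contHahn (a b c d : ℂ) (n : ℕ) (x : ℝ) : ℂ :=
  (Complex.I ^ n * cPoch (a + c) n * cPoch (a + d) n /
      cPoch ((n : ℂ) + a + b + c + d - 1) n) *
    ∑ m ∈ Finset.range (n + 1),
      cPoch (-(n : ℂ)) m * cPoch ((n : ℂ) + a + b + c + d - 1) m *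
          cPoch (a + Complex.I * x) m /
        (cPoch (a + c) m * cPoch (a + d) m * (Nat.factorial m : ℂ))


lemma cPoch_zero (X : ℂ) : cPoch X 0 = 1 := by simp [cPoch]

lemma cPoch_succ (X : ℂ) (m : ℕ) : cPoch X (m+1) = cPoch X m * (X + m) := by
  simpa [cPoch] using Finset.prod_range_succ (fun j => X + (j:ℂ)) m

lemma cPoch_shift (X : ℂ) (m : ℕ) : cPoch (X - 1) m * (X + m - 1) = (X - 1) * cPoch X m := by
  induction m with
  | zero => simp [cPoch_zero]
  | succ m ih =>
    rw [cPoch_succ, cPoch_succ]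
    push_cast
    linear_combination (X + m) * ih

lemma cPoch_shift' (X : ℂ) (m : ℕ) (h : X + m - 1 ≠ 0) :
    cPoch (X - 1) m = (X - 1) * cPoch X m / (X + m - 1) := by
  field_simp
  linear_combination cPoch_shift X m

lemma cPoch_shift'' (X : ℂ) (m : ℕ) (h : X - 1 ≠ 0) :
    cPoch X m = cPoch (X - 1) m * (X + m - 1) / (X - 1) := by
  field_simp
  linear_combination - cPoch_shift X m

lemma cPoch_nat_zero (n m : ℕ) (h : n < m) : cPoch (-(n:ℂ)) m = 0 := by
  apply Finset.prod_eq_zero (Finset.mem_range.mpr h)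
  simp

lemma cPoch_ne_zero (X : ℂ) (m : ℕ) (h : ∀ j : ℕ, X + j ≠ 0) : cPoch X m ≠ 0 :=
  Finset.prod_ne_zero_iff.mpr fun j _ => h j

lemma sum_shift (X : ℂ) (N : ℕ) (f : ℕ → ℂ) :
    ∑ m ∈ Finset.range (N+1), f m * cPoch (X - 1) m
      = (∑ m ∈ Finset.range (N+1), (f m - (m+1) * f (m+1)) * cPoch X m)
        + (N+1) * f (N+1) * cPoch X N := by
  induction N with
  | zero => simp [cPoch_zero, cPoch_succ]
  | succ N ih =>
    rw [Finset.sum_range_succ, ih]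
    conv_rhs => rw [Finset.sum_range_succ]
    have h1 : cPoch (X-1) (N+1) = cPoch X (N+1) - (N+1) * cPoch X N := by
      have h2 : cPoch (X-1) (N+1) = cPoch X N * (X - 1) := by
        have := Finset.prod_range_succ' (fun j => X - 1 + (j:ℂ)) N
        simpa [cPoch, add_comm, add_left_comm, add_assoc, sub_add_eq_add_sub] using this
      rw [h2, cPoch_succ]
      ring
    rw [h1]
    push_cast
    ring


set_option maxHeartbeats 1000000 in
/-- Contiguous relation for monic continuous Hahn polynomials in `a`. -/
theorem contHahn_shift_a (a b c d : ℂ) (n : ℕ) (hn : 1 ≤ n)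
    (hac : ∀ k : ℤ, a + c + (k : ℂ) ≠ 0) (had : ∀ k : ℤ, a + d + (k : ℂ) ≠ 0)
    (hs : ∀ k : ℤ, a + b + c + d + (k : ℂ) ≠ 0) :
    ∀ x : ℝ,
      contHahn (a - 1) b c d n x
        = contHahn a b c d n x
          + (Complex.I * n * (b + c + n - 1) * (b + d + n - 1) /
              ((2 * n + a + b + c + d - 3) * (2 * n + a + b + c + d - 2))) *
            contHahn a b c d (n - 1) x := by
  obtain ⟨k, rfl⟩ : ∃ k, n = k + 1 := ⟨n - 1, (Nat.succ_pred_eq_of_pos hn).symm⟩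
  intro x
  unfold contHahn
  simp only [Nat.add_sub_cancel]
  push_cast
  simp only [show a - 1 + c = (a+c) - 1 from by ring,
    show a - 1 + d = (a+d) - 1 from by ring,
    show a - 1 + Complex.I*(x:ℂ) = (a + Complex.I*(x:ℂ)) - 1 from by ring,
    show (k:ℂ) + 1 + (a-1) + b + c + d - 1 = ((k:ℂ)+1+a+b+c+d-1) - 1 from by ring,
    show (k:ℂ) + a + b + c + d - 1 = ((k:ℂ)+1+a+b+c+d-1) - 1 from by ring]
  set X : ℂ := a + Complex.I*(x:ℂ) with hX
  set S : ℂ := (k:ℂ)+1+a+b+c+d-1 with hS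
  set f : ℕ → ℂ := fun m => cPoch (-((k:ℂ)+1)) m * cPoch (S - 1) m /
      (cPoch ((a+c) - 1) m * cPoch ((a+d) - 1) m * (Nat.factorial m : ℂ)) with hf
  have hsum : ∑ m ∈ Finset.range (k+1+1),
      cPoch (-((k:ℂ)+1)) m * cPoch (S - 1) m * cPoch (X - 1) m /
        (cPoch ((a+c) - 1) m * cPoch ((a+d) - 1) m * (Nat.factorial m : ℂ))
      = ∑ m ∈ Finset.range (k+1+1), f m * cPoch (X - 1) m :=
    Finset.sum_congr rfl fun m _ => by rw [hf]; ring
  rw [hsum, sum_shift X (k+1) f]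
  have hzero : f (k+1+1) = 0 := by
    have h0 : cPoch (-((k:ℂ)+1)) (k+1+1) = 0 := by
      have := cPoch_nat_zero (k+1) (k+1+1) (by omega)
      rw [Nat.cast_add, Nat.cast_one] at this
      exact this
    show cPoch (-((k:ℂ)+1)) (k+1+1) * cPoch (S-1) (k+1+1) /
      (cPoch ((a+c) - 1) (k+1+1) * cPoch ((a+d) - 1) (k+1+1) * ((Nat.factorial (k+1+1)) : ℂ)) = 0
    rw [h0]
    ring
  rw [hzero]
  have husum : ∑ m ∈ Finset.range (k+1),
      cPoch (-(k:ℂ)) m * cPoch (S - 1) m * cPoch X m /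
        (cPoch (a+c) m * cPoch (a+d) m * (Nat.factorial m : ℂ))
      = ∑ m ∈ Finset.range (k+1+1),
      cPoch (-(k:ℂ)) m * cPoch (S - 1) m * cPoch X m /
        (cPoch (a+c) m * cPoch (a+d) m * (Nat.factorial m : ℂ)) := by
    conv_rhs => rw [Finset.sum_range_succ]
    rw [cPoch_nat_zero k (k+1) (by omega)]
    ring
  rw [husum]
  simp only [mul_zero, zero_mul, add_zero, Finset.mul_sum, ← Finset.sum_add_distrib]
  apply Finset.sum_congr rfl
  intro m hm
  have hac' : ∀ (r : ℤ) (t : ℂ), t = a + c + r → t ≠ 0 := fun r t ht => ht ▸ hac r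
  have had' : ∀ (r : ℤ) (t : ℂ), t = a + d + r → t ≠ 0 := fun r t ht => ht ▸ had r
  have hs' : ∀ (r : ℤ) (t : ℂ), t = a + b + c + d + r → t ≠ 0 := fun r t ht => ht ▸ hs r
  have nzc_m : a + c + (m:ℂ) - 1 ≠ 0 := hac' ((m:ℤ)-1) _ (by push_cast; ring)
  have nzd_m : a + d + (m:ℂ) - 1 ≠ 0 := had' ((m:ℤ)-1) _ (by push_cast; ring)
  have nzc_k : a + c + ((k+1 : ℕ):ℂ) - 1 ≠ 0 := hac' (k:ℤ) _ (by push_cast; ring)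
  have nzd_k : a + d + ((k+1 : ℕ):ℂ) - 1 ≠ 0 := had' (k:ℤ) _ (by push_cast; ring)
  have nzS_m : S + (m:ℂ) - 1 ≠ 0 := hs' ((k:ℤ)+m-1) _ (by rw [hS]; push_cast; ring)
  have nzS_k1 : S + ((k+1 : ℕ):ℂ) - 1 ≠ 0 := hs' (2*(k:ℤ)) _ (by rw [hS]; push_cast; ring)
  have nzS_k : S + ((k : ℕ):ℂ) - 1 ≠ 0 := hs' (2*(k:ℤ)-1) _ (by rw [hS]; push_cast; ring)
  have nzSk : S + ((k : ℕ):ℂ) ≠ 0 := hs' (2*(k:ℤ)) _ (by rw [hS]; push_cast; ring)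
  have nzN : -(k:ℂ) - 1 ≠ 0 := by
    intro h
    apply Nat.cast_add_one_ne_zero (R := ℂ) k
    linear_combination -h
  have nzC1 : 2 * ((k:ℂ) + 1) + a + b + c + d - 3 ≠ 0 := hs' (2*(k:ℤ)-1) _ (by push_cast; ring)
  have nzC2 : 2 * ((k:ℂ) + 1) + a + b + c + d - 2 ≠ 0 := hs' (2*(k:ℤ)) _ (by push_cast; ring)
  have pc_m : cPoch (a+c) m ≠ 0 := cPoch_ne_zero _ _ (fun j => hac' j _ (by push_cast; ring))
  have pd_m : cPoch (a+d) m ≠ 0 := cPoch_ne_zero _ _ (fun j => had' j _ (by push_cast; ring))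
  have pc_k : cPoch (a+c) k ≠ 0 := cPoch_ne_zero _ _ (fun j => hac' j _ (by push_cast; ring))
  have pd_k : cPoch (a+d) k ≠ 0 := cPoch_ne_zero _ _ (fun j => had' j _ (by push_cast; ring))
  have pS_m : cPoch S m ≠ 0 := cPoch_ne_zero _ _ (fun j => hs' ((k:ℤ)+j) _ (by rw [hS]; push_cast; ring))
  have pS_k : cPoch S k ≠ 0 := cPoch_ne_zero _ _ (fun j => hs' ((k:ℤ)+j) _ (by rw [hS]; push_cast; ring))
  have fac_m : ((Nat.factorial m : ℕ):ℂ) ≠ 0 := Nat.cast_ne_zero.mpr (Nat.factorial_ne_zero m)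
  have nm1 : ((m:ℂ) + 1) ≠ 0 := Nat.cast_add_one_ne_zero m
  simp only [hf, Nat.factorial_succ]
  rw [cPoch_succ (-((k:ℂ)+1)) m, cPoch_succ (S-1) m, cPoch_succ (a+c-1) m, cPoch_succ (a+d-1) m]
  rw [cPoch_shift' (a+c) m nzc_m, cPoch_shift' (a+d) m nzd_m, cPoch_shift' S m nzS_m]
  rw [cPoch_shift' (a+c) (k+1) nzc_k, cPoch_shift' (a+d) (k+1) nzd_k,
      cPoch_shift' S (k+1) nzS_k1, cPoch_shift' S k nzS_k]
  rw [cPoch_shift'' (-(k:ℂ)) m nzN, show (-(k:ℂ) - 1) = -((k:ℂ)+1) from by ring]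
  rw [cPoch_succ S k, cPoch_succ (a+c) k, cPoch_succ (a+d) k, pow_succ]
  push_cast at nzc_k nzd_k nzS_k1 ⊢
  -- canonicalize scalar factors
  rw [show S - 1 + (m:ℂ) = S + (m:ℂ) - 1 from by ring,
      show a+c-1+(m:ℂ) = a+c+(m:ℂ)-1 from by ring,
      show a+d-1+(m:ℂ) = a+d+(m:ℂ)-1 from by ring,
      show a+c+((k:ℂ)+1)-1 = a+c+(k:ℂ) from by ring,
      show a+d+((k:ℂ)+1)-1 = a+d+(k:ℂ) from by ring,
      show S+((k:ℂ)+1)-1 = S+(k:ℂ) from by ring,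
      show 2*((k:ℂ)+1)+a+b+c+d-3 = S+(k:ℂ)-1 from by rw [hS]; ring,
      show 2*((k:ℂ)+1)+a+b+c+d-2 = S+(k:ℂ) from by rw [hS]; ring,
      show b+c+((k:ℂ)+1)-1 = b+c+(k:ℂ) from by ring,
      show b+d+((k:ℂ)+1)-1 = b+d+(k:ℂ) from by ring,
      show (-((k:ℂ)+1)+(m:ℂ)) = (m:ℂ)-((k:ℂ)+1) from by ring,
      show (-(k:ℂ)+(m:ℂ)-1) = (m:ℂ)-((k:ℂ)+1) from by ring]
  -- generalize all scalar linear factors to opaque variables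
  generalize hgw' : S + (k:ℂ) - 1 = wK' 
  generalize hgw1 : S + (m:ℂ) - 1 = w1
  generalize hgwK : S + (k:ℂ) = wK
  generalize hgu1 : a + c + (m:ℂ) - 1 = u1
  generalize hgv1 : a + d + (m:ℂ) - 1 = v1
  generalize hguK : a + c + (k:ℂ) = uK
  generalize hgvK : a + d + (k:ℂ) = vK
  generalize hgal : a + c - 1 = al
  generalize hgbe : a + d - 1 = be
  generalize hgga : S - 1 = ga
  generalize hgB1 : b + c + (k:ℂ) = B1
  generalize hgB2 : b + d + (k:ℂ) = B2
  generalize hgde : (m:ℂ) - ((k:ℂ) + 1) = de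
  generalize hgep : (m:ℂ) + 1 = ep
  generalize hgNN : (k:ℂ) + 1 = NN
  have base : wK*(u1*v1 - de*w1) = uK*vK*w1 - B1*B2*de := by
    rw [← hgwK, ← hgu1, ← hgv1, ← hgde, ← hgw1, ← hguK, ← hgvK, ← hgB1, ← hgB2, hS]
    ring
  rw [hgu1] at nzc_m
  rw [hgv1] at nzd_m
  rw [hgw1] at nzS_m
  rw [hgw'] at nzS_k
  rw [hgwK] at nzSk
  have hal : al ≠ 0 := hgal ▸ hac' (-1) _ (by push_cast; ring)
  have hbe : be ≠ 0 := hgbe ▸ had' (-1) _ (by push_cast; ring)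
  have hga : ga ≠ 0 := hgga ▸ (by rw [hS]; exact hs' ((k:ℤ)-1) _ (by push_cast; ring))
  have huK : uK ≠ 0 := hguK ▸ hac' (k:ℤ) _ (by push_cast; ring)
  have hvK : vK ≠ 0 := hgvK ▸ had' (k:ℤ) _ (by push_cast; ring)
  have hNN : NN ≠ 0 := hgNN ▸ Nat.cast_add_one_ne_zero k
  have hep : ep ≠ 0 := hgep ▸ nm1
  field_simp [hal, hbe, hga, huK, hvK, hNN, hep, nzc_m, nzd_m, nzS_m, nzS_k, nzSk,
    pc_m, pd_m, pc_k, pd_k, pS_m, pS_k, fac_m]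
  have e1 : cPoch (-NN) m * (ga * cPoch S m) * (u1 * v1) *
                  (al * cPoch (a + c) m * (be * cPoch (a + d) m) * (ep * (Nat.factorial m : ℂ))) /
                (w1 * (al * cPoch (a + c) m * (be * cPoch (a + d) m) * (Nat.factorial m : ℂ)))
      = cPoch (-NN) m * (ga * cPoch S m) * (u1 * v1) * ep / w1 := by
    rw [div_eq_div_iff
      (mul_ne_zero nzS_m (mul_ne_zero (mul_ne_zero (mul_ne_zero hal pc_m) (mul_ne_zero hbe pd_m)) fac_m))
      nzS_m]
    ring
  linear_combination (cPoch (-NN) m * cPoch X m) * base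
end
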